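/- Let θ₁ ∈ (−π, π), let n be a positive integer, and let g : ℝ → ℝ be 2π-periodic and n times continuously differentiable. Then ∫_{−π}^{π} g(θ)·(∂ⁿ/∂θⁿ) u_δ(ρ, θ, θ₁) dθ tends to (−1)ⁿ·g⁽ⁿ⁾(θ₁) as ρ → 1⁻, where u_δ(ρ, θ, θ₁) = 1/(2π) − (1/π)·ρ(ρ − cos(θ − θ₁)) / ((ρ² + 1) − 2ρ cos(θ − θ₁)) and ∂ⁿ/∂θⁿ denotes the n-th partial derivative with respect to θ at fixed ρ. -/

import Mathlib

open Real Filter intervalIntegral MeasureTheory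
open scoped ContDiff

noncomputable def KK (ρ φ : ℝ) : ℝ :=
  (1 - ρ ^ 2) / (2 * Real.pi * ((ρ ^ 2 + 1) - 2 * ρ * Real.cos φ))

lemma Dpos {ρ : ℝ} (h0 : 0 < ρ) (h1 : ρ < 1) (φ : ℝ) :
    0 < (ρ ^ 2 + 1) - 2 * ρ * Real.cos φ := by
  nlinarith [Real.cos_le_one φ, sq_nonneg (1 - ρ), mul_pos h0 (sub_pos.mpr h1)]

lemma KK_nonneg {ρ : ℝ} (h0 : 0 < ρ) (h1 : ρ < 1) (φ : ℝ) : 0 ≤ KK ρ φ := by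
  have hD := Dpos h0 h1 φ
  have h2 : (0:ℝ) ≤ 1 - ρ ^ 2 := by nlinarith
  exact div_nonneg h2 (le_of_lt (mul_pos (by positivity) hD))

lemma KK_contDiff {ρ : ℝ} (h0 : 0 < ρ) (h1 : ρ < 1) : ContDiff ℝ ∞ (KK ρ) := by
  apply ContDiff.div contDiff_const
  · exact contDiff_const.mul (contDiff_const.sub (contDiff_const.mul Real.contDiff_cos))
  · intro φ
    exact ne_of_gt (mul_pos (by positivity) (Dpos h0 h1 φ))

lemma KK_periodic (ρ : ℝ) : Function.Periodic (KK ρ) (2 * Real.pi) := fun x => by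
  simp [KK, Real.cos_add_two_pi]

lemma KK_integral {ρ : ℝ} (h0 : 0 < ρ) (h1 : ρ < 1) :
    ∫ φ in (-Real.pi)..Real.pi, KK ρ φ = 1 := by
  have hπ := Real.pi_pos
  set F : ℝ → ℝ := fun φ =>
    φ / (2 * Real.pi) + (1 / Real.pi) * Real.arctan (ρ * Real.sin φ / (1 - ρ * Real.cos φ)) with hF
  have hden : ∀ φ : ℝ, (1 : ℝ) - ρ * Real.cos φ ≠ 0 := by
    intro φ
    have := Real.cos_le_one φ
    have := Real.neg_one_le_cos φ
    nlinarith
  have hderiv : ∀ φ ∈ Set.uIcc (-Real.pi) Real.pi, HasDerivAt F (KK ρ φ) φ := by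
    intro φ _
    have hu : HasDerivAt (fun φ : ℝ => ρ * Real.sin φ / (1 - ρ * Real.cos φ))
        ((ρ * Real.cos φ * (1 - ρ * Real.cos φ) - ρ * Real.sin φ * (ρ * Real.sin φ))
          / (1 - ρ * Real.cos φ) ^ 2) φ := by
      have := ((Real.hasDerivAt_sin φ).const_mul ρ).fun_div
        (((Real.hasDerivAt_cos φ).const_mul ρ).const_sub 1) (hden φ)
      refine this.congr_deriv (Eq.symm ?_)
      ring
    have harc := hu.arctan
    have hlin : HasDerivAt (fun φ : ℝ => φ / (2 * Real.pi)) (1 / (2 * Real.pi)) φ := by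
      simpa using (hasDerivAt_id φ).div_const (2 * Real.pi)
    have := hlin.add (harc.const_mul (1 / Real.pi))
    refine this.congr_deriv (Eq.symm ?_)
    have hD := Dpos h0 h1 φ
    have hd := hden φ
    have hsc := Real.sin_sq_add_cos_sq φ
    rw [KK]
    have hD' : (ρ ^ 2 + 1) - 2 * ρ * Real.cos φ ≠ 0 := hD.ne'
    have e : 1 + (ρ * Real.sin φ / (1 - ρ * Real.cos φ)) ^ 2
        = ((ρ ^ 2 + 1) - 2 * ρ * Real.cos φ) / (1 - ρ * Real.cos φ) ^ 2 := by
      field_simp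
      linear_combination ρ ^ 2 * hsc
    have hs : ρ * Real.sin φ * (ρ * Real.sin φ) = ρ ^ 2 - ρ ^ 2 * Real.cos φ ^ 2 := by
      linear_combination ρ ^ 2 * hsc
    rw [e, hs]
    rw [one_div_div, div_mul_div_comm, mul_comm ((1 - ρ * Real.cos φ) ^ 2) _,
      mul_div_mul_right _ _ (pow_ne_zero 2 hd)]
    field_simp
    have hD3 : ρ ^ 2 + 1 - ρ * 2 * Real.cos φ ≠ 0 := by rw [show ρ * 2 = 2 * ρ by ring]; exact hD'
    field_simp
    ring
  have hint : IntervalIntegrable (KK ρ) volume (-Real.pi) Real.pi :=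
    ((KK_contDiff h0 h1).continuous).intervalIntegrable _ _
  rw [integral_eq_sub_of_hasDerivAt hderiv hint]
  simp [hF, Real.sin_pi, Real.arctan_zero]
  field_simp
  ring

lemma periodic_deriv' {f : ℝ → ℝ} {T : ℝ} (hf : Function.Periodic f T) :
    Function.Periodic (deriv f) T := by
  intro x
  have hfe : (fun y : ℝ => f (y + T)) = f := funext hf
  calc deriv f (x + T) = deriv (fun y : ℝ => f (y + T)) x := (deriv_comp_add_const f T x).symm
    _ = deriv f x := by rw [hfe]

lemma periodic_iteratedDeriv {f : ℝ → ℝ} {T : ℝ} (hf : Function.Periodic f T) (n : ℕ) :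
    Function.Periodic (iteratedDeriv n f) T := by
  induction n with
  | zero => simpa using hf
  | succ k ih => rw [iteratedDeriv_succ]; exact periodic_deriv' ih

lemma parts (k : ℕ) : ∀ (h u : ℝ → ℝ), ContDiff ℝ k h → ContDiff ℝ ∞ u →
    Function.Periodic h (2 * Real.pi) → Function.Periodic u (2 * Real.pi) →
    ∫ θ in (-Real.pi)..Real.pi, h θ * iteratedDeriv k u θ
      = (-1 : ℝ) ^ k * ∫ θ in (-Real.pi)..Real.pi, iteratedDeriv k h θ * u θ := by
  induction k with
  | zero => intro h u _ _ _ _; simp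
  | succ k ih =>
    intro h u hh hu hhp hup
    have hπ := Real.pi_pos
    have hucont : ∀ m : ℕ, Continuous (iteratedDeriv m u) := by
      intro m
      rw [iteratedDeriv_eq_iterate]
      exact (hu.iterate_deriv m).continuous
    have hhd : Differentiable ℝ h := by
      apply hh.differentiable
      simp
    have hh' : ContDiff ℝ k (deriv h) := by
      have : ContDiff ℝ ((k : ℕ∞) + 1) h := by exact_mod_cast hh
      exact (contDiff_succ_iff_deriv.mp (by exact_mod_cast this)).2.2
    have hh'c : Continuous (deriv h) := hh'.continuous
    have step : ∫ θ in (-Real.pi)..Real.pi, h θ * iteratedDeriv (k+1) u θ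
        = - ∫ θ in (-Real.pi)..Real.pi, deriv h θ * iteratedDeriv k u θ := by
      have hb := integral_mul_deriv_eq_deriv_mul_of_hasDerivAt
        (u := h) (v := iteratedDeriv k u) (u' := deriv h) (v' := iteratedDeriv (k+1) u)
        (a := -Real.pi) (b := Real.pi)
        (hhd.continuous.continuousOn) ((hucont k).continuousOn)
        (fun x _ => (hhd x).hasDerivAt)
        (fun x _ => by
          have : DifferentiableAt ℝ (iteratedDeriv k u) x := by
            rw [iteratedDeriv_eq_iterate]
            exact ((hu.iterate_deriv k).differentiable (by norm_num)).differentiableAt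
          simpa [iteratedDeriv_succ] using this.hasDerivAt)
        (hh'c.intervalIntegrable _ _) ((hucont (k+1)).intervalIntegrable _ _)
      have hbd : h Real.pi * iteratedDeriv k u Real.pi
          - h (-Real.pi) * iteratedDeriv k u (-Real.pi) = 0 := by
        have h1 : h Real.pi = h (-Real.pi) := by
          have := hhp (-Real.pi); rw [show -Real.pi + 2*Real.pi = Real.pi by ring] at this
          exact this.symm ▸ rfl
        have h2 : iteratedDeriv k u Real.pi = iteratedDeriv k u (-Real.pi) := by
          have := periodic_iteratedDeriv hup k (-Real.pi)
          rw [show -Real.pi + 2*Real.pi = Real.pi by ring] at this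
          exact this
        rw [h1, h2]; ring
      rw [hb]
      linarith [hbd]
    rw [step, ih (deriv h) u hh' hu (periodic_deriv' hhp) hup]
    rw [show iteratedDeriv k (deriv h) = iteratedDeriv (k+1) h from iteratedDeriv_succ'.symm]
    ring

lemma approx (h : ℝ → ℝ) (hc : Continuous h) :
    Tendsto (fun ρ : ℝ => ∫ φ in (-Real.pi)..Real.pi, h φ * KK ρ φ)
      (nhdsWithin 1 (Set.Iio 1)) (nhds (h 0)) := by
  have hπ := Real.pi_pos
  rw [Metric.tendsto_nhdsWithin_nhds]
  intro ε hε
  -- bound on h - h 0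
  obtain ⟨M0, hM0⟩ := IsCompact.exists_bound_of_continuousOn (isCompact_Icc
    (a := -Real.pi) (b := Real.pi)) (f := fun x => h x - h 0) (by fun_prop)
  set M : ℝ := max M0 1 with hM
  have hM1 : (1:ℝ) ≤ M := le_max_right _ _
  have hMpos : (0:ℝ) < M := lt_of_lt_of_le one_pos hM1
  have hMb : ∀ x ∈ Set.Icc (-Real.pi) Real.pi, |h x - h 0| ≤ M := by
    intro x hx
    exact le_trans (by simpa using hM0 x hx) (le_max_left _ _)
  -- continuity at 0
  obtain ⟨δ₁, hδ₁pos, hδ₁⟩ := Metric.continuousAt_iff.mp hc.continuousAt (ε/4) (by positivity)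
  set δ : ℝ := min (δ₁/2) (Real.pi/2) with hδdef
  have hδpos : 0 < δ := lt_min (by positivity) (by positivity)
  have hδπ : δ ≤ Real.pi/2 := min_le_right _ _
  have hnear : ∀ x : ℝ, |x| ≤ δ → |h x - h 0| ≤ ε/4 := by
    intro x hx
    have : dist x 0 < δ₁ := by
      rw [Real.dist_eq, sub_zero]
      calc |x| ≤ δ := hx
        _ ≤ δ₁/2 := min_le_left _ _
        _ < δ₁ := by linarith
    exact le_of_lt (hδ₁ this)
  have hcosδ : Real.cos δ < 1 := by
    have := Real.cos_lt_cos_of_nonneg_of_le_pi (le_refl 0) (by linarith) hδpos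
    simpa using this
  -- the bound function B
  set B : ℝ → ℝ := fun ρ => (1 - ρ^2) / (2*Real.pi*((ρ^2+1) - 2*ρ*Real.cos δ)) with hB
  have hBcont : ContinuousAt B 1 := by
    apply ContinuousAt.div (by fun_prop) (by fun_prop)
    have : (1:ℝ)^2 + 1 - 2*1*Real.cos δ = 2 - 2*Real.cos δ := by ring
    intro hcon
    rw [show ((1:ℝ)^2+1) - 2*1*Real.cos δ = 2 - 2*Real.cos δ by ring] at hcon
    nlinarith [Real.pi_pos]
  have hB1 : B 1 = 0 := by simp [hB]
  have : Tendsto B (nhds 1) (nhds 0) := hB1 ▸ hBcont.tendsto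
  obtain ⟨δρ, hδρpos, hδρ⟩ := Metric.tendsto_nhds_nhds.mp this (ε/(16*Real.pi*M)) (by positivity)
  refine ⟨min δρ (1/2), by positivity, ?_⟩
  intro ρ hρlt hρd
  have hρd1 : dist ρ 1 < δρ := lt_of_lt_of_le hρd (min_le_left _ _)
  have hρhalf : dist ρ 1 < 1/2 := lt_of_lt_of_le hρd (min_le_right _ _)
  have h0ρ : 0 < ρ := by
    rw [Real.dist_eq] at hρhalf
    cases abs_lt.mp hρhalf; linarith
  have h1ρ : ρ < 1 := hρlt
  have hBρ : B ρ < ε/(16*Real.pi*M) := by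
    have := hδρ hρd1
    rwa [Real.dist_eq, sub_zero, abs_of_nonneg] at this
    · have hD := Dpos h0ρ h1ρ δ
      have h2 : (0:ℝ) ≤ 1 - ρ ^ 2 := by nlinarith
      exact div_nonneg h2 (le_of_lt (mul_pos (by positivity) hD))
  have hBρ0 : 0 ≤ B ρ := by
    have hD := Dpos h0ρ h1ρ δ
    have h2 : (0:ℝ) ≤ 1 - ρ ^ 2 := by nlinarith
    exact div_nonneg h2 (le_of_lt (mul_pos (by positivity) hD))
  have hKcont : Continuous (KK ρ) := (KK_contDiff h0ρ h1ρ).continuous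
  -- pointwise bound
  have hpt : ∀ x ∈ Set.Icc (-Real.pi) Real.pi,
      |(h x - h 0) * KK ρ x| ≤ (ε/4) * KK ρ x + 2*M*(B ρ) := by
    intro x hx
    have hK0 : 0 ≤ KK ρ x := KK_nonneg h0ρ h1ρ x
    rw [abs_mul, abs_of_nonneg hK0]
    rcases le_or_gt |x| δ with hxδ | hxδ
    · have h1 := mul_le_mul_of_nonneg_right (hnear x hxδ) hK0
      have h2 : 0 ≤ 2*M*(B ρ) := mul_nonneg (by linarith) hBρ0
      linarith
    · -- far from 0 : KK ρ x ≤ B ρ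
      have hxπ : |x| ≤ Real.pi := by
        rw [abs_le]; exact ⟨hx.1, hx.2⟩
      have hcos : Real.cos x ≤ Real.cos δ := by
        rw [← Real.cos_abs x]
        exact Real.cos_le_cos_of_nonneg_of_le_pi (le_of_lt hδpos) hxπ (le_of_lt hxδ)
      have hKB : KK ρ x ≤ B ρ := by
        rw [KK, hB]
        show (1 - ρ ^ 2) / (2 * Real.pi * ((ρ ^ 2 + 1) - 2 * ρ * Real.cos x))
          ≤ (1 - ρ ^ 2) / (2 * Real.pi * ((ρ ^ 2 + 1) - 2 * ρ * Real.cos δ))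
        have hnum : (0:ℝ) ≤ 1 - ρ ^ 2 := by nlinarith
        have hden2 : (0:ℝ) < 2 * Real.pi * ((ρ ^ 2 + 1) - 2 * ρ * Real.cos δ) :=
          mul_pos (by positivity) (Dpos h0ρ h1ρ δ)
        apply div_le_div_of_nonneg_left hnum hden2
        have hcc : ρ * Real.cos x ≤ ρ * Real.cos δ :=
          mul_le_mul_of_nonneg_left hcos (le_of_lt h0ρ)
        nlinarith [mul_le_mul_of_nonneg_left
          (show (ρ ^ 2 + 1) - 2 * ρ * Real.cos δ ≤ (ρ ^ 2 + 1) - 2 * ρ * Real.cos x by linarith)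
          (by positivity : (0:ℝ) ≤ 2 * Real.pi)]
      have hhx := hMb x hx
      have h3 : |h x - h 0| * KK ρ x ≤ M * (B ρ) := mul_le_mul hhx hKB hK0 (le_of_lt hMpos)
      have h4 : 0 ≤ M * (B ρ) := mul_nonneg (le_of_lt hMpos) hBρ0
      have h5 : 0 ≤ (ε/4) * KK ρ x := mul_nonneg (by positivity) hK0
      linarith
  -- assemble
  have hint1 : IntervalIntegrable (fun x => (h x - h 0) * KK ρ x) volume (-Real.pi) Real.pi :=
    (((hc.sub continuous_const).mul hKcont)).intervalIntegrable _ _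
  have hint2 : IntervalIntegrable (fun x => (ε/4) * KK ρ x + 2*M*(B ρ)) volume (-Real.pi) Real.pi :=
    ((continuous_const.mul hKcont).add continuous_const).intervalIntegrable _ _
  have e1 : ∫ φ in (-Real.pi)..Real.pi, (h φ - h 0) * KK ρ φ
      = (∫ φ in (-Real.pi)..Real.pi, h φ * KK ρ φ) - h 0 := by
    have : ∀ φ : ℝ, (h φ - h 0) * KK ρ φ = h φ * KK ρ φ - h 0 * KK ρ φ := fun φ => by ring
    simp_rw [this]
    rw [intervalIntegral.integral_sub (f := fun φ => h φ * KK ρ φ) (g := fun φ => h 0 * KK ρ φ) ((hc.mul hKcont).intervalIntegrable _ _)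
      ((continuous_const.mul hKcont).intervalIntegrable _ _),
      intervalIntegral.integral_const_mul, KK_integral h0ρ h1ρ, mul_one]
  have e2 : ∫ φ in (-Real.pi)..Real.pi, ((ε/4) * KK ρ φ + 2*M*(B ρ))
      = ε/4 + 4*Real.pi*M*(B ρ) := by
    rw [intervalIntegral.integral_add (f := fun φ => (ε/4) * KK ρ φ) (g := fun _ => 2*M*(B ρ)) ((continuous_const.mul hKcont).intervalIntegrable _ _)
      (intervalIntegrable_const), intervalIntegral.integral_const_mul,
      KK_integral h0ρ h1ρ, intervalIntegral.integral_const]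
    simp only [smul_eq_mul]
    ring
  rw [Real.dist_eq]
  have step1 : |(∫ φ in (-Real.pi)..Real.pi, h φ * KK ρ φ) - h 0|
      ≤ ε/4 + 4*Real.pi*M*(B ρ) := by
    rw [← e1, ← e2]
    calc |∫ φ in (-Real.pi)..Real.pi, (h φ - h 0) * KK ρ φ|
        ≤ ∫ φ in (-Real.pi)..Real.pi, |(h φ - h 0) * KK ρ φ| :=
          intervalIntegral.abs_integral_le_integral_abs (by linarith)
      _ ≤ ∫ φ in (-Real.pi)..Real.pi, ((ε/4) * KK ρ φ + 2*M*(B ρ)) := by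
          apply intervalIntegral.integral_mono_on (by linarith) hint1.abs hint2
          intro x hx
          exact hpt x hx
  have : 4*Real.pi*M*(B ρ) < 4*Real.pi*M*(ε/(16*Real.pi*M)) :=
    mul_lt_mul_of_pos_left hBρ (by positivity)
  have hlast : 4*Real.pi*M*(ε/(16*Real.pi*M)) = ε/4 := by
    field_simp
    ring
  calc |(∫ φ in (-Real.pi)..Real.pi, h φ * KK ρ φ) - h 0| ≤ ε/4 + 4*Real.pi*M*(B ρ) := step1
    _ < ε/4 + ε/4 := by rw [← hlast]; linarith
    _ < ε := by linarith

/-- the fundamental property of the n-th derivative of the Dirac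
delta "function": for a `2π`-periodic, `n` times continuously differentiable
test function `g`,
`∫_{−π}^{π} g(θ)·(∂ⁿ/∂θⁿ) u_δ(ρ, θ, θ₁) dθ → (−1)ⁿ·g⁽ⁿ⁾(θ₁)` as `ρ → 1⁻`. -/
theorem stmt_10 (θ₁ : ℝ) (hθ₁ : θ₁ ∈ Set.Ioo (-Real.pi) Real.pi)
    (n : ℕ) (hn : 0 < n)
    (g : ℝ → ℝ) (hper : Function.Periodic g (2 * Real.pi))
    (hg : ContDiff ℝ n g) :
    Filter.Tendsto (fun ρ : ℝ =>
        ∫ θ in (-Real.pi)..Real.pi,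
          g θ *
            iteratedDeriv n (fun t : ℝ =>
              1 / (2 * Real.pi) -
                (1 / Real.pi) * (ρ * (ρ - Real.cos (t - θ₁))) /
                  ((ρ ^ 2 + 1) - 2 * ρ * Real.cos (t - θ₁))) θ)
      (nhdsWithin 1 (Set.Iio 1)) (nhds ((-1 : ℝ) ^ n * iteratedDeriv n g θ₁)) := by
  have hπ := Real.pi_pos
  set G : ℝ → ℝ := fun φ => iteratedDeriv n g (θ₁ + φ) with hGdef
  have hGcont : Continuous G :=
    (hg.continuous_iteratedDeriv n le_rfl).comp (continuous_const.add continuous_id)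
  have hlim : Tendsto (fun ρ : ℝ => (-1 : ℝ) ^ n * ∫ φ in (-Real.pi)..Real.pi, G φ * KK ρ φ)
      (nhdsWithin 1 (Set.Iio 1)) (nhds ((-1 : ℝ) ^ n * iteratedDeriv n g θ₁)) := by
    have := (approx G hGcont).const_mul ((-1 : ℝ) ^ n)
    simpa [hGdef] using this
  apply Tendsto.congr' _ hlim
  -- eventually, ρ ∈ Ioo 0 1
  have hev : ∀ᶠ ρ in nhdsWithin (1:ℝ) (Set.Iio 1), ρ ∈ Set.Ioo (0:ℝ) 1 := by
    have h1 : Set.Ioi (0:ℝ) ∈ nhdsWithin (1:ℝ) (Set.Iio 1) :=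
      nhdsWithin_le_nhds (Ioi_mem_nhds one_pos)
    have h2 : Set.Iio (1:ℝ) ∈ nhdsWithin (1:ℝ) (Set.Iio 1) := self_mem_nhdsWithin
    filter_upwards [h1, h2] with ρ hρ1 hρ2
    exact ⟨hρ1, hρ2⟩
  filter_upwards [hev] with ρ hρ
  obtain ⟨h0ρ, h1ρ⟩ := hρ
  -- step (i) : rewrite the inner function as KK ρ (t - θ₁)
  have hfun : (fun t : ℝ =>
      1 / (2 * Real.pi) -
        (1 / Real.pi) * (ρ * (ρ - Real.cos (t - θ₁))) /
          ((ρ ^ 2 + 1) - 2 * ρ * Real.cos (t - θ₁)))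
      = fun t : ℝ => KK ρ (t + (-θ₁)) := by
    funext t
    rw [show t + (-θ₁) = t - θ₁ by ring, KK]
    have hD := Dpos h0ρ h1ρ (t - θ₁)
    field_simp
    ring
  -- step (ii) : the iterated derivative translates
  have hitd : ∀ θ : ℝ, iteratedDeriv n (fun t : ℝ => KK ρ (t + (-θ₁))) θ
      = iteratedDeriv n (KK ρ) (θ - θ₁) := by
    intro θ
    rw [iteratedDeriv_comp_add_const n (KK ρ) (-θ₁)]
    norm_num [sub_eq_add_neg]
  set J : ℝ → ℝ := iteratedDeriv n (KK ρ) with hJ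
  have hJper : Function.Periodic J (2 * Real.pi) := periodic_iteratedDeriv (KK_periodic ρ) n
  -- step (iii) : change of variables
  set H : ℝ → ℝ := fun φ => g (θ₁ + φ) * J φ with hH
  have hHper : Function.Periodic H (2 * Real.pi) := by
    intro x
    have h1 : g (θ₁ + (x + 2 * Real.pi)) = g (θ₁ + x) := by
      rw [show θ₁ + (x + 2 * Real.pi) = (θ₁ + x) + 2 * Real.pi by ring]
      exact hper (θ₁ + x)
    simp only [hH, h1, hJper x]
  have hcov : ∫ θ in (-Real.pi)..Real.pi, g θ * J (θ - θ₁)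
      = ∫ φ in (-Real.pi)..Real.pi, g (θ₁ + φ) * J φ := by
    have e1 : (fun θ : ℝ => g θ * J (θ - θ₁)) = fun θ : ℝ => H (θ - θ₁) := by
      funext θ
      simp only [hH]
      rw [show θ₁ + (θ - θ₁) = θ by ring]
    rw [e1, intervalIntegral.integral_comp_sub_right H θ₁]
    have := hHper.intervalIntegral_add_eq (-Real.pi - θ₁) (-Real.pi)
    rw [show -Real.pi - θ₁ + 2 * Real.pi = Real.pi - θ₁ by ring,
      show -Real.pi + 2 * Real.pi = Real.pi by ring] at this
    exact this
  -- step (iv) : integration by parts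
  have hgper' : Function.Periodic (fun φ : ℝ => g (θ₁ + φ)) (2 * Real.pi) := by
    intro x
    show g (θ₁ + (x + 2 * Real.pi)) = g (θ₁ + x)
    rw [show θ₁ + (x + 2 * Real.pi) = (θ₁ + x) + 2 * Real.pi by ring]
    exact hper (θ₁ + x)
  have hgc : ContDiff ℝ n (fun φ : ℝ => g (θ₁ + φ)) :=
    hg.comp (contDiff_const.add contDiff_id)
  have hparts := parts n (fun φ : ℝ => g (θ₁ + φ)) (KK ρ) hgc (KK_contDiff h0ρ h1ρ)
    hgper' (KK_periodic ρ)
  have htrans : iteratedDeriv n (fun φ : ℝ => g (θ₁ + φ)) = fun φ : ℝ => G φ := by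
    rw [iteratedDeriv_comp_const_add n g θ₁]
  -- assemble
  symm
  calc ∫ θ in (-Real.pi)..Real.pi,
        g θ * iteratedDeriv n (fun t : ℝ =>
          1 / (2 * Real.pi) -
            (1 / Real.pi) * (ρ * (ρ - Real.cos (t - θ₁))) /
              ((ρ ^ 2 + 1) - 2 * ρ * Real.cos (t - θ₁))) θ
      = ∫ θ in (-Real.pi)..Real.pi, g θ * J (θ - θ₁) := by
        rw [hfun]
        congr 1
        funext θ
        rw [hitd θ]
    _ = ∫ φ in (-Real.pi)..Real.pi, g (θ₁ + φ) * J φ := hcov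
    _ = (-1 : ℝ) ^ n * ∫ φ in (-Real.pi)..Real.pi,
          iteratedDeriv n (fun φ : ℝ => g (θ₁ + φ)) φ * KK ρ φ := hparts
    _ = (-1 : ℝ) ^ n * ∫ φ in (-Real.pi)..Real.pi, G φ * KK ρ φ := by rw [htrans]
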